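/- After BFS with predecessor-list construction from s completes, the paths obtained by backtracking through the predecessor lists from a node u are exactly the shortest paths from s to u, and each such path is enumerated exactly once. -/

import Mathlib

/-- A plain directed multigraph. -/
structure DGraph (V E : Type) where
  src : E → V
  tgt : E → V

/-- `G.IsWalk v es w`: the edge list `es` forms a walk from `v` to `w`. -/
def DGraph.IsWalk {V E : Type} (G : DGraph V E) : V → List E → V → Prop
  | v, [], w => v = w
  | v, e :: es, w => G.src e = v ∧ G.IsWalk (G.tgt e) es w

/-- Distance: minimum number of edges over all walks, `⊤` if unreachable. -/
noncomputable def DGraph.dist {V E : Type} (G : DGraph V E) (v w : V) : ℕ∞ :=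
  sInf {n : ℕ∞ | ∃ es : List E, G.IsWalk v es w ∧ (es.length : ℕ∞) = n}

/-- `getAllPaths`: backtracking enumeration of all paths (as edge lists) from `s` to a node,
following the predecessor lists, with fuel. -/
def allPaths {V E : Type} [DecidableEq V] (prevList : V → List (V × E)) (s : V) :
    ℕ → V → List (List E)
  | 0, _ => []
  | fuel + 1, u =>
      if u = s then [[]]
      else ((prevList u).map
        (fun p => (allPaths prevList s fuel p.1).map (fun es => es ++ [p.2]))).flatten

namespace DGraph
variable {V E : Type} (G : DGraph V E)

theorem isWalk_append {v m w : V} {a b : List E} (ha : G.IsWalk v a m) (hb : G.IsWalk m b w) :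
    G.IsWalk v (a ++ b) w := by
  induction a generalizing v with
  | nil => cases ha; exact hb
  | cons e es ih => exact ⟨ha.1, ih ha.2⟩

theorem isWalk_split {v w : V} {a b : List E} (h : G.IsWalk v (a ++ b) w) :
    ∃ m, G.IsWalk v a m ∧ G.IsWalk m b w := by
  induction a generalizing v with
  | nil => exact ⟨v, rfl, h⟩
  | cons e es ih =>
    obtain ⟨m, h1, h2⟩ := ih h.2
    exact ⟨m, ⟨h.1, h1⟩, h2⟩

theorem dist_le {v w : V} {es : List E} (h : G.IsWalk v es w) :
    G.dist v w ≤ es.length := sInf_le ⟨es, h, rfl⟩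

theorem exists_shortest {v w : V} (h : G.dist v w ≠ ⊤) :
    ∃ es : List E, G.IsWalk v es w ∧ (es.length : ℕ∞) = G.dist v w := by
  have hne : {n : ℕ∞ | ∃ es : List E, G.IsWalk v es w ∧ (es.length : ℕ∞) = n}.Nonempty := by
    by_contra hc
    rw [Set.not_nonempty_iff_eq_empty] at hc
    exact h (by simp [dist, hc])
  exact csInf_mem hne

theorem dist_self (v : V) : G.dist v v = 0 := by
  refine le_antisymm ?_ zero_le
  simpa using G.dist_le (v := v) (w := v) (es := []) rfl

theorem eq_of_dist_eq_zero {v w : V} (h : G.dist v w = 0) : w = v := by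
  obtain ⟨es, hw, hl⟩ := G.exists_shortest (v := v) (w := w) (by simp [h])
  rw [h] at hl
  have : es = [] := by
    cases es with
    | nil => rfl
    | cons e t => simp at hl
  subst this
  exact hw.symm

end DGraph

theorem allPaths_spec {V E : Type} [DecidableEq V] (G : DGraph V E) (s : V)
    (prevList : V → List (V × E))
    (hinv : ∀ x : V, x ≠ s → ∀ p : V × E, p ∈ prevList x ↔
      (G.src p.2 = p.1 ∧ G.tgt p.2 = x ∧ G.dist s p.1 + 1 = G.dist s x))
    (hnd : ∀ x : V, (prevList x).Nodup) :
    ∀ n : ℕ, ∀ u : V, G.dist s u = n → ∀ fuel : ℕ, n < fuel →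
      (allPaths prevList s fuel u).Nodup ∧
      ∀ es : List E, es ∈ allPaths prevList s fuel u ↔
        (G.IsWalk s es u ∧ (es.length : ℕ∞) = G.dist s u) := by
  intro n
  induction n using Nat.strong_induction_on with
  | _ n ih =>
    intro u hdist fuel hfuel
    obtain ⟨f, rfl⟩ : ∃ f, fuel = f + 1 := ⟨fuel - 1, by omega⟩
    by_cases hus : u = s
    · have h0 : G.dist s u = 0 := by rw [hus]; exact G.dist_self s
      simp only [allPaths, if_pos hus]
      refine ⟨List.nodup_singleton _, fun es => ?_⟩
      simp only [List.mem_singleton]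
      constructor
      · rintro rfl
        exact ⟨hus.symm, by simp [h0]⟩
      · rintro ⟨hw, hl⟩
        rw [h0] at hl
        cases es with
        | nil => rfl
        | cons e t => simp at hl
    · -- u ≠ s
      have hn0 : n ≠ 0 := by
        rintro rfl
        exact hus (G.eq_of_dist_eq_zero (by simpa using hdist))
      obtain ⟨m, rfl⟩ : ∃ m, n = m + 1 := ⟨n - 1, by omega⟩
      have hmf : m < f := by omega
      have hdp : ∀ p : V × E, p ∈ prevList u → G.dist s p.1 = (m : ℕ∞) := by
        intro p hp
        have h := ((hinv u hus p).mp hp).2.2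
        rw [hdist] at h
        push_cast at h
        exact WithTop.add_right_cancel (by simp : (1 : ℕ∞) ≠ ⊤) h
      have hIH : ∀ p : V × E, p ∈ prevList u →
          (allPaths prevList s f p.1).Nodup ∧
          ∀ es : List E, es ∈ allPaths prevList s f p.1 ↔
            (G.IsWalk s es p.1 ∧ (es.length : ℕ∞) = G.dist s p.1) :=
        fun p hp => ih m (by omega) p.1 (hdp p hp) f hmf
      simp only [allPaths, if_neg hus]
      constructor
      · -- Nodup
        rw [List.nodup_flatten]
        constructor
        · intro l hl
          rw [List.mem_map] at hl
          obtain ⟨p, hp, rfl⟩ := hl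
          exact ((hIH p hp).1).map (List.append_left_injective [p.2])
        · rw [List.pairwise_map]
          refine ((hnd u).imp_of_mem ?_)
          intro p q hp hq hpq
          intro es hesp hesq
          rw [List.mem_map] at hesp hesq
          obtain ⟨a, _, ha⟩ := hesp
          obtain ⟨b, _, hb⟩ := hesq
          have hab : a ++ [p.2] = b ++ [q.2] := ha.trans hb.symm
          have h2 : p.2 = q.2 := by
            have := congrArg (fun l => l.getLast?) hab
            simpa using this
          have h1 : p.1 = q.1 := by
            rw [← ((hinv u hus p).mp hp).1, ← ((hinv u hus q).mp hq).1, h2]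
          exact hpq (Prod.ext h1 h2)
      · intro es
        simp only [List.mem_flatten, List.mem_map]
        constructor
        · rintro ⟨l, ⟨p, hp, rfl⟩, hes⟩
          rw [List.mem_map] at hes
          obtain ⟨a, ha, rfl⟩ := hes
          obtain ⟨hwa, hla⟩ := ((hIH p hp).2 a).mp ha
          obtain ⟨hsrc, htgt, -⟩ := (hinv u hus p).mp hp
          refine ⟨G.isWalk_append hwa ⟨hsrc, htgt⟩, ?_⟩
          rw [hdist]
          have hal : a.length = m := by
            rw [hdp p hp] at hla; exact_mod_cast hla
          simp only [List.length_append, List.length_singleton, hal]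
        · rintro ⟨hw, hl⟩
          rcases es.eq_nil_or_concat with rfl | ⟨a, e, rfl⟩
          · exfalso
            rw [hdist] at hl
            have : ([] : List E).length = m + 1 := by exact_mod_cast hl
            simp at this
          · rw [List.concat_eq_append] at hw hl ⊢
            obtain ⟨mid, hwa, hwb⟩ := G.isWalk_split hw
            obtain ⟨hsrc, htgt⟩ : G.src e = mid ∧ G.tgt e = u := by
              obtain ⟨h1, h2⟩ := hwb
              exact ⟨h1, h2⟩
            have hlen : a.length = m := by
              rw [hdist] at hl
              have : (a ++ [e]).length = m + 1 := by exact_mod_cast hl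
              simp only [List.length_append, List.length_singleton] at this
              omega
            have hdmid_le : G.dist s mid ≤ (m : ℕ∞) := by
              have := G.dist_le hwa
              rwa [hlen] at this
            have hdmid : G.dist s mid = (m : ℕ∞) := by
              refine le_antisymm hdmid_le ?_
              have hfin : G.dist s mid ≠ ⊤ :=
                (hdmid_le.trans_lt (by simp)).ne
              have hfin' := hfin
              lift G.dist s mid to ℕ using hfin' with j hj
              obtain ⟨w', hw', hlw'⟩ := G.exists_shortest (v := s) (w := mid) (hj ▸ hfin)
              have hwl : w'.length = j := by rw [← hj] at hlw'; exact_mod_cast hlw'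
              have hwalk : G.IsWalk s (w' ++ [e]) u :=
                G.isWalk_append hw' ⟨hsrc, htgt⟩
              have h2 := G.dist_le hwalk
              rw [hdist] at h2
              have : m + 1 ≤ j + 1 := by
                simp only [List.length_append, List.length_singleton, hwl] at h2
                exact_mod_cast h2
              exact Nat.cast_le.mpr (by omega)
            have hpmem : (mid, e) ∈ prevList u := by
              rw [hinv u hus]
              refine ⟨hsrc, htgt, ?_⟩
              rw [hdmid, hdist]
              push_cast
              ring
            refine ⟨_, ⟨(mid, e), hpmem, rfl⟩, ?_⟩
            rw [List.mem_map]
            refine ⟨a, ?_, rfl⟩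
            rw [(hIH _ hpmem).2 a]
            exact ⟨hwa, by rw [hdmid, hlen]⟩

theorem dist_lt_card {V E : Type} [Fintype V] (G : DGraph V E) (s u : V) {n : ℕ}
    (hdist : G.dist s u = n) : n < Fintype.card V + 1 := by
  obtain ⟨es, hw, hl⟩ := G.exists_shortest (v := s) (w := u) (by simp [hdist])
  rw [hdist] at hl
  have hlen : es.length = n := by exact_mod_cast hl
  have key : ∀ k : ℕ, k ≤ n → ∃ m : V, G.dist s m = (k : ℕ∞) := by
    intro k hk
    rw [← List.take_append_drop k es] at hw
    obtain ⟨mid, hwa, hwb⟩ := G.isWalk_split hw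
    have hlta : (es.take k).length = k := by rw [List.length_take]; omega
    refine ⟨mid, le_antisymm (by simpa [hlta] using G.dist_le hwa) ?_⟩
    have hfin : G.dist s mid ≠ ⊤ := by
      have := G.dist_le hwa
      rw [hlta] at this
      exact (this.trans_lt (by simp)).ne
    have hfin' := hfin
    lift G.dist s mid to ℕ using hfin' with j hj
    obtain ⟨w', hw', hlw'⟩ := G.exists_shortest (v := s) (w := mid) (hj ▸ hfin)
    have hwl : w'.length = j := by rw [← hj] at hlw'; exact_mod_cast hlw'
    have hwalk : G.IsWalk s (w' ++ es.drop k) u := G.isWalk_append hw' hwb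
    have hle := G.dist_le hwalk
    rw [hdist] at hle
    have hld : (es.drop k).length = n - k := by rw [List.length_drop, hlen]
    have hnat : n ≤ j + (n - k) := by
      simp only [List.length_append, hwl, hld] at hle
      exact_mod_cast hle
    exact Nat.cast_le.mpr (by omega)
  choose fv hfv using key
  have hinj : Function.Injective (fun a : Fin (n + 1) => fv a (by omega)) := by
    intro a b hab
    have h1 : ((a : ℕ) : ℕ∞) = ((b : ℕ) : ℕ∞) := by
      rw [← hfv (a : ℕ) (by omega), ← hfv (b : ℕ) (by omega)]
      exact congrArg (G.dist s) hab
    exact Fin.ext (by exact_mod_cast h1)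
  have := Fintype.card_le_of_injective _ hinj
  simp only [Fintype.card_fin] at this
  omega

/-- after BFS with predecessor lists completes (so that `prevList(x)` holds
exactly the pairs `(w,e)` with `e` an edge from `w` to `x` and `dist(s,w)+1 = dist(s,x)`),
backtracking from a reachable node `u` enumerates exactly the shortest paths from `s` to `u`,
each exactly once. -/
theorem getAllPaths_enumerates_shortest_paths {V E : Type} [DecidableEq V] [Fintype V]
    (G : DGraph V E) (s u : V) (prevList : V → List (V × E))
    (hinv : ∀ x : V, x ≠ s → ∀ p : V × E, p ∈ prevList x ↔
      (G.src p.2 = p.1 ∧ G.tgt p.2 = x ∧ G.dist s p.1 + 1 = G.dist s x))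
    (hnd : ∀ x : V, (prevList x).Nodup)
    (hreach : G.dist s u ≠ ⊤) :
    (allPaths prevList s (Fintype.card V + 1) u).Nodup ∧
    ∀ es : List E, es ∈ allPaths prevList s (Fintype.card V + 1) u ↔
      (G.IsWalk s es u ∧ (es.length : ℕ∞) = G.dist s u) := by
  obtain ⟨n, hn⟩ : ∃ n : ℕ, G.dist s u = n := by
    lift G.dist s u to ℕ using hreach with n
    exact ⟨n, rfl⟩
  exact allPaths_spec G s prevList hinv hnd n u hn _ (dist_lt_card G s u hn)
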